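/- Let A be a bicomplete abelian category (having all small limits and colimits), and let (𝒳, 𝒴) be a cotorsion pair of chain complexes over A, meaning 𝒳 = { X : Ext^1(X,Y) = 0 for all Y ∈ 𝒴 } and 𝒴 = { Y : Ext^1(X,Y) = 0 for all X ∈ 𝒳 }, where Ext^1 is computed in the abelian category Ch(A) of chain complexes over A. Let 𝒞 be a class of objects of A. If the disk complexes D^n(C) lie in 𝒴 for every integer n and every C ∈ 𝒞, then every bounded below acyclic chain complex all of whose cycle objects lie in 𝒞 is also in 𝒴. -/

import Mathlib

/-!
STATEMENT 7: Let `A` be a bicomplete abelian category and `(𝒳, 𝒴)` a cotorsion pair in the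
category of `ℤ`-indexed chain complexes over `A` (each class is the `Ext¹`-orthogonal of the
other, `Ext¹` computed in `Ch(A)`).  Let `𝒞` be a class of objects of `A`.  If `D^n C ∈ 𝒴`
for all `n : ℤ` and `C ∈ 𝒞`, then every bounded below acyclic complex all of whose cycle
objects lie in `𝒞` is in `𝒴`.

The vanishing of the (Yoneda) group `Ext¹(A, B)` is expressed by the (equivalent)
statement that every short exact sequence `0 → B → E → A → 0` splits.
-/

universe v u

open CategoryTheory Limits ZeroObject

/-- Vanishing of (Yoneda) `Ext¹(A, B)` in an abelian category: every short exact
sequence `0 → B → E → A → 0` splits. -/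
def Ext1Vanishes {C : Type*} [Category C] [Abelian C] (A B : C) : Prop :=
  ∀ (E : C) (f : B ⟶ E) (g : E ⟶ A) (w : f ≫ g = 0),
    (ShortComplex.mk f g w).ShortExact → ∃ s : A ⟶ E, s ≫ g = 𝟙 A

variable {A : Type u} [Category.{v} A] [Abelian A]

/-- Components of the disk complex. -/
noncomputable def diskX (n : ℤ) (C : A) : ℤ → A := fun k => if k = n ∨ k = n - 1 then C else 0

/-- The disk complex `D^n C`: `C` in degrees `n` and `n - 1`, with identity differential. -/
noncomputable def disk (n : ℤ) (C : A) : ChainComplex A ℤ where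
  X := diskX n C
  d i j :=
    if h : i = n ∧ j = n - 1 then
      eqToHom (show diskX n C i = diskX n C j by
        simp [diskX, h.1, h.2, show ¬ (n - 1 = n) by omega])
    else 0
  shape i j hij := by
    try dsimp only
    rw [dif_neg]
    rintro ⟨rfl, rfl⟩
    exact hij (by simp [ComplexShape.down_Rel])
  d_comp_d' i j k _ _ := by
    try dsimp only
    by_cases h1 : i = n ∧ j = n - 1
    · rw [dif_pos h1, dif_neg, comp_zero]
      rintro ⟨h2, -⟩
      obtain ⟨-, h3⟩ := h1
      omega
    · rw [dif_neg h1, zero_comp]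

lemma pullback_shortExact {C M T S : A} (i : C ⟶ M) (p : M ⟶ T) (w : i ≫ p = 0)
    (h : (ShortComplex.mk i p w).ShortExact) (φ : S ⟶ T) :
    (ShortComplex.mk (pullback.lift i (0 : C ⟶ S) (by rw [w, zero_comp]) : C ⟶ pullback p φ)
      (pullback.snd p φ) (by simp [pullback.lift_snd])).ShortExact := by
  have := h.mono_f
  have := h.epi_g
  have hmono : Mono (pullback.lift i (0 : C ⟶ S) (by rw [w, zero_comp]) : C ⟶ pullback p φ) :=
    mono_of_mono_fac (pullback.lift_fst i 0 _)
  refine ShortComplex.ShortExact.mk' ?_ hmono inferInstance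
  apply ShortComplex.exact_of_f_is_kernel
  refine KernelFork.IsLimit.ofι' _ _ (fun {W} k hk => ?_)
  obtain ⟨l, hl⟩ := KernelFork.IsLimit.lift' h.fIsKernel (k ≫ pullback.fst p φ)
    (by rw [Category.assoc, pullback.condition, ← Category.assoc, hk, zero_comp])
  refine ⟨l, ?_⟩
  apply pullback.hom_ext
  · simpa [pullback.lift_fst] using hl
  · simpa [pullback.lift_snd] using hk.symm

lemma shortExact_of_isZero_of_isIso {Z E T : A} (f : Z ⟶ E) (g : E ⟶ T) (w : f ≫ g = 0)
    (hz : IsZero Z) (hg : IsIso g) : (ShortComplex.mk f g w).ShortExact := by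
  have hmono : Mono f := ⟨fun u v _ => hz.eq_of_tgt u v⟩
  have hepi : Epi g := inferInstance
  refine ShortComplex.ShortExact.mk' ?_ hmono hepi
  have hf : (ShortComplex.mk f g w).f = 0 := hz.eq_of_src _ _
  exact (ShortComplex.exact_iff_mono _ hf).2 inferInstance

namespace DiskExt

variable (K : ChainComplex A ℤ) (m : ℤ) {C M : A} (p : M ⟶ K.X m)

noncomputable def EX : ℤ → A := fun j =>
  if j = m + 1 then pullback p (K.d (m+1) m) else if j = m then M else K.X j

lemma EX_top : EX K m p (m+1) = pullback p (K.d (m+1) m) := if_pos rfl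

lemma EX_mid : EX K m p m = M := by
  rw [EX]
  rw [if_neg (by omega), if_pos rfl]

lemma EX_other (j : ℤ) (h1 : j ≠ m+1) (h2 : j ≠ m) : EX K m p j = K.X j := by
  rw [EX]
  rw [if_neg h1, if_neg h2]

noncomputable def Ed : ∀ j k : ℤ, EX K m p j ⟶ EX K m p k := fun j k =>
  if hjk : k + 1 = j then
    if hj1 : j = m + 1 then
      eqToHom (by rw [hj1]; exact EX_top K m p) ≫ pullback.fst p (K.d (m+1) m) ≫
        eqToHom (show M = EX K m p k by rw [show k = m by omega, EX_mid])
    else if hj2 : j = m then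
      eqToHom (by rw [hj2]; exact EX_mid K m p) ≫ (p ≫ K.d m (m-1)) ≫
        eqToHom (show K.X (m-1) = EX K m p k by
          rw [show k = m - 1 by omega, EX_other K m p (m-1) (by omega) (by omega)])
    else if hj3 : j = m + 2 then
      eqToHom (by rw [hj3]; exact EX_other K m p (m+2) (by omega) (by omega)) ≫
        pullback.lift 0 (K.d (m+2) (m+1)) (by rw [zero_comp, K.d_comp_d]) ≫
        eqToHom (show pullback p (K.d (m+1) m) = EX K m p k by
          rw [show k = m + 1 by omega]; exact (EX_top K m p).symm)
    else
      eqToHom (EX_other K m p j hj1 hj2) ≫ K.d j k ≫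
        eqToHom ((EX_other K m p k (by omega) (by omega)).symm)
  else 0

lemma Ed_top : Ed K m p (m+1) m =
    eqToHom (EX_top K m p) ≫ pullback.fst p (K.d (m+1) m) ≫ eqToHom (EX_mid K m p).symm := by
  rw [Ed]
  rw [dif_pos (by omega), dif_pos rfl]

lemma Ed_mid : Ed K m p m (m-1) =
    eqToHom (EX_mid K m p) ≫ (p ≫ K.d m (m-1)) ≫
      eqToHom (EX_other K m p (m-1) (by omega) (by omega)).symm := by
  rw [Ed]
  rw [dif_pos (by omega), dif_neg (by omega), dif_pos rfl]

lemma Ed_lift : Ed K m p (m+2) (m+1) =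
    eqToHom (EX_other K m p (m+2) (by omega) (by omega)) ≫
      pullback.lift 0 (K.d (m+2) (m+1)) (by rw [zero_comp, K.d_comp_d]) ≫
      eqToHom (EX_top K m p).symm := by
  rw [Ed]
  rw [dif_pos (by omega), dif_neg (by omega), dif_neg (by omega), dif_pos rfl]

lemma Ed_gen (j k : ℤ) (hjk : k + 1 = j) (h1 : j ≠ m+1) (h2 : j ≠ m) (h3 : j ≠ m+2) :
    Ed K m p j k = eqToHom (EX_other K m p j h1 h2) ≫ K.d j k ≫
      eqToHom ((EX_other K m p k (by omega) (by omega)).symm) := by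
  rw [Ed]
  rw [dif_pos hjk, dif_neg h1, dif_neg h2, dif_neg h3]

lemma Ed_zero (j k : ℤ) (hjk : ¬ (k + 1 = j)) : Ed K m p j k = 0 := by
  rw [Ed]
  rw [dif_neg hjk]

noncomputable def Ecx : ChainComplex A ℤ where
  X := EX K m p
  d := Ed K m p
  shape j k h := Ed_zero K m p j k (by simpa [ComplexShape.down_Rel] using h)
  d_comp_d' j k l hjk hkl := by
    simp only [ComplexShape.down_Rel] at hjk hkl
    by_cases h1 : j = m + 1
    · subst h1
      obtain rfl : m = k := by omega
      obtain rfl : m - 1 = l := by omega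
      rw [Ed_top, Ed_mid]
      simp only [Category.assoc, eqToHom_trans_assoc, eqToHom_refl, Category.id_comp]
      rw [← Category.assoc (pullback.fst p (K.d (m+1) m)) p, pullback.condition]
      simp
    · by_cases h2 : j = m
      · obtain rfl : m = j := h2.symm
        obtain rfl : m - 1 = k := by omega
        obtain rfl : m - 1 - 1 = l := by omega
        rw [Ed_mid, Ed_gen K m p (m-1) (m-1-1) (by omega) (by omega) (by omega) (by omega)]
        simp only [Category.assoc, eqToHom_trans_assoc, eqToHom_refl, Category.id_comp]
        rw [← Category.assoc (K.d m (m-1)), K.d_comp_d]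
        simp
      · by_cases h3 : j = m + 2
        · subst h3
          obtain rfl : m + 1 = k := by omega
          obtain rfl : m = l := by omega
          rw [Ed_lift, Ed_top]
          simp only [Category.assoc, eqToHom_trans_assoc, eqToHom_refl, Category.id_comp]
          rw [← Category.assoc (pullback.lift 0 (K.d (m+2) (m+1)) _), pullback.lift_fst]
          simp
        · by_cases h4 : j = m + 3
          · subst h4
            obtain rfl : m + 2 = k := by omega
            obtain rfl : m + 1 = l := by omega
            rw [Ed_gen K m p (m+3) (m+2) (by omega) (by omega) (by omega) (by omega), Ed_lift]
            simp only [Category.assoc, eqToHom_trans_assoc, eqToHom_refl, Category.id_comp]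
            have : K.d (m+3) (m+2) ≫ pullback.lift (f := p) (g := K.d (m+1) m) 0
                (K.d (m+2) (m+1)) (by rw [zero_comp, K.d_comp_d]) = 0 := by
              apply pullback.hom_ext
              · simp [pullback.lift_fst]
              · simp [pullback.lift_snd]
            rw [← Category.assoc (K.d (m+3) (m+2)), this]
            simp
          · rw [Ed_gen K m p j k hjk h1 h2 h3,
              Ed_gen K m p k l hkl (by omega) (by omega) (by omega)]
            simp only [Category.assoc, eqToHom_trans_assoc, eqToHom_refl, Category.id_comp]
            rw [← Category.assoc (K.d j k), K.d_comp_d]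
            simp


noncomputable def egf : ∀ j : ℤ, EX K m p j ⟶ K.X j := fun j =>
  if hj1 : j = m + 1 then
    eqToHom (by rw [hj1]; exact EX_top K m p) ≫ pullback.snd p (K.d (m+1) m) ≫
      eqToHom (show K.X (m+1) = K.X j by rw [hj1])
  else if hj2 : j = m then
    eqToHom (by rw [hj2]; exact EX_mid K m p) ≫ p ≫ eqToHom (show K.X m = K.X j by rw [hj2])
  else eqToHom (EX_other K m p j hj1 hj2)

lemma egf_top : egf K m p (m+1) = eqToHom (EX_top K m p) ≫ pullback.snd p (K.d (m+1) m) := by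
  rw [egf]
  rw [dif_pos rfl]
  simp

lemma egf_mid : egf K m p m = eqToHom (EX_mid K m p) ≫ p := by
  rw [egf]
  rw [dif_neg (by omega), dif_pos rfl]
  simp

lemma egf_other (j : ℤ) (h1 : j ≠ m + 1) (h2 : j ≠ m) :
    egf K m p j = eqToHom (EX_other K m p j h1 h2) := by
  rw [egf]
  rw [dif_neg h1, dif_neg h2]

/-- The projection `Ecx ⟶ K`. -/
noncomputable def eg : Ecx K m p ⟶ K where
  f := egf K m p
  comm' j k hjk := by
    simp only [ComplexShape.down_Rel] at hjk
    show egf K m p j ≫ K.d j k = Ed K m p j k ≫ egf K m p k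
    by_cases h1 : j = m + 1
    · subst h1
      obtain rfl : m = k := by omega
      rw [Ed_top, egf_top, egf_mid]
      simp only [Category.assoc, eqToHom_trans_assoc, eqToHom_refl, Category.id_comp]
      rw [pullback.condition]
    · by_cases h2 : j = m
      · obtain rfl : m = j := h2.symm
        obtain rfl : m - 1 = k := by omega
        rw [Ed_mid, egf_mid, egf_other K m p (m-1) (by omega) (by omega)]
        simp [eqToHom_trans_assoc]
      · by_cases h3 : j = m + 2
        · subst h3
          obtain rfl : m + 1 = k := by omega
          rw [Ed_lift, egf_top, egf_other K m p (m+2) (by omega) (by omega)]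
          simp only [Category.assoc, eqToHom_trans_assoc, eqToHom_refl, Category.id_comp,
            eqToHom_comp_iff]
          rw [pullback.lift_snd]
        · rw [Ed_gen K m p j k hjk h1 h2 h3, egf_other K m p j h1 h2,
            egf_other K m p k (by omega) (by omega)]
          simp [eqToHom_trans_assoc]

variable {C : A} (i : C ⟶ M) (w : i ≫ p = 0)

noncomputable def eff : ∀ j : ℤ, diskX (m+1) C j ⟶ EX K m p j := fun j =>
  if hj1 : j = m + 1 then
    eqToHom (show diskX (m+1) C j = C by rw [hj1]; exact if_pos (Or.inl rfl)) ≫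
      pullback.lift i 0 (by rw [w, zero_comp]) ≫
      eqToHom (show pullback p (K.d (m+1) m) = EX K m p j by rw [hj1]; exact (EX_top K m p).symm)
  else if hj2 : j = m then
    eqToHom (show diskX (m+1) C j = C by rw [hj2]; exact if_pos (Or.inr (by omega))) ≫ i ≫
      eqToHom (show M = EX K m p j by rw [hj2]; exact (EX_mid K m p).symm)
  else 0

lemma eff_top : eff K m p i w (m+1) =
    eqToHom (show diskX (m+1) C (m+1) = C from if_pos (Or.inl rfl)) ≫
      pullback.lift i 0 (by rw [w, zero_comp]) ≫ eqToHom (EX_top K m p).symm := by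
  rw [eff]
  rw [dif_pos rfl]

lemma eff_mid : eff K m p i w m =
    eqToHom (show diskX (m+1) C m = C from if_pos (Or.inr (by omega))) ≫ i ≫
      eqToHom (EX_mid K m p).symm := by
  rw [eff]
  rw [dif_neg (by omega), dif_pos rfl]

lemma eff_other (j : ℤ) (h1 : j ≠ m + 1) (h2 : j ≠ m) : eff K m p i w j = 0 := by
  rw [eff]
  rw [dif_neg h1, dif_neg h2]

lemma disk_d_self (n : ℤ) (C : A) : (disk n C).d n (n-1) =
    eqToHom (show diskX n C n = diskX n C (n-1) by
      simp [diskX, show ¬ (n - 1 = n) by omega]) := by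
  show dite _ _ _ = _
  exact dif_pos ⟨rfl, rfl⟩

lemma disk_d_other (n : ℤ) (C : A) (j k : ℤ) (h : ¬ (j = n ∧ k = n - 1)) :
    (disk n C).d j k = 0 := by
  show dite _ _ _ = _
  exact dif_neg h

/-- The inclusion `disk (m+1) C ⟶ Ecx`. -/
noncomputable def ef : disk (m+1) C ⟶ Ecx K m p where
  f := eff K m p i w
  comm' j k hjk := by
    simp only [ComplexShape.down_Rel] at hjk
    show eff K m p i w j ≫ Ed K m p j k = (disk (m+1) C).d j k ≫ eff K m p i w k
    by_cases h1 : j = m + 1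
    · subst h1
      obtain rfl : m = k := by omega
      have hd : (disk (m+1) C).d (m+1) m = eqToHom (show diskX (m+1) C (m+1) = diskX (m+1) C m by
          simp [diskX, show ¬ ((m:ℤ) + 1 - 1 = m + 1) by omega]) := by
        show dite _ _ _ = _
        exact dif_pos (show m + 1 = m + 1 ∧ m = m + 1 - 1 from ⟨rfl, by omega⟩)
      rw [Ed_top, eff_top, eff_mid, hd]
      simp only [Category.assoc, eqToHom_trans_assoc, eqToHom_refl, Category.id_comp]
      rw [← Category.assoc (pullback.lift i 0 _), pullback.lift_fst]
      erw [eqToHom_trans_assoc]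
      rfl
    · by_cases h2 : j = m
      · obtain rfl : m = j := h2.symm
        obtain rfl : m - 1 = k := by omega
        rw [Ed_mid, eff_mid, eff_other K m p i w (m-1) (by omega) (by omega)]
        erw [comp_zero]
        simp only [Category.assoc, eqToHom_trans_assoc, eqToHom_refl, Category.id_comp]
        rw [← Category.assoc i p, w]
        simp
        rfl
      · rw [eff_other K m p i w j h1 h2, zero_comp,
          disk_d_other (m+1) C j k (by rintro ⟨hj, -⟩; exact h1 hj)]
        erw [zero_comp]
        rfl

lemma ef_eg_zero : ef K m p i w ≫ eg K m p = 0 := by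
  ext j
  show eff K m p i w j ≫ egf K m p j = 0
  by_cases h1 : j = m + 1
  · subst h1
    rw [eff_top, egf_top]
    simp only [Category.assoc, eqToHom_trans_assoc, eqToHom_refl, Category.id_comp]
    rw [pullback.lift_snd, comp_zero]
  · by_cases h2 : j = m
    · obtain rfl : m = j := h2.symm
      rw [eff_mid, egf_mid]
      simp only [Category.assoc, eqToHom_trans_assoc, eqToHom_refl, Category.id_comp]
      rw [w, comp_zero]
    · rw [eff_other K m p i w j h1 h2, zero_comp]


lemma diskX_isZero (n : ℤ) (C : A) (j : ℤ) (h1 : j ≠ n) (h2 : j ≠ n - 1) :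
    IsZero (diskX n C j) := by
  have : diskX n C j = 0 := by
    rw [diskX]
    rw [if_neg (by tauto)]
  rw [this]
  exact isZero_zero A

lemma diskExt_shortExact (h : (ShortComplex.mk i p w).ShortExact) :
    (ShortComplex.mk (ef K m p i w) (eg K m p) (ef_eg_zero K m p i w)).ShortExact := by
  apply HomologicalComplex.shortExact_of_degreewise_shortExact
  intro j
  by_cases h1 : j = m + 1
  · subst h1
    refine ShortComplex.shortExact_of_iso ?_ (pullback_shortExact i p w h (K.d (m+1) m))
    refine ShortComplex.isoMk (eqToIso (show C = diskX (m+1) C (m+1) from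
        (if_pos (Or.inl rfl)).symm))
      (eqToIso (EX_top K m p).symm) (Iso.refl _) ?_ ?_
    · show eqToHom (show C = diskX (m+1) C (m+1) from (if_pos (Or.inl rfl)).symm) ≫
          eff K m p i w (m+1) =
          pullback.lift i 0 (by rw [w, zero_comp]) ≫ eqToHom (EX_top K m p).symm
      rw [eff_top]
      simp [eqToHom_trans_assoc]
    · show eqToHom (EX_top K m p).symm ≫ egf K m p (m+1) = pullback.snd p (K.d (m+1) m) ≫ 𝟙 _
      rw [egf_top]
      simp
  · by_cases h2 : j = m
    · obtain rfl : m = j := h2.symm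
      refine ShortComplex.shortExact_of_iso ?_ h
      refine ShortComplex.isoMk (eqToIso (show C = diskX (m+1) C m from
          (if_pos (Or.inr (by omega))).symm))
        (eqToIso (EX_mid K m p).symm) (Iso.refl _) ?_ ?_
      · show eqToHom (show C = diskX (m+1) C m from (if_pos (Or.inr (by omega))).symm) ≫
            eff K m p i w m = i ≫ eqToHom (EX_mid K m p).symm
        rw [eff_mid]
        simp [eqToHom_trans_assoc]
      · show eqToHom (EX_mid K m p).symm ≫ egf K m p m = p ≫ 𝟙 _
        rw [egf_mid]
        simp
    · refine shortExact_of_isZero_of_isIso _ _ _ ?_ ?_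
      · exact diskX_isZero (m+1) C j h1 (by omega)
      · show IsIso (egf K m p j)
        rw [egf_other K m p j h1 h2]
        infer_instance

lemma ext1Vanishes_of_disk (K' : ChainComplex A ℤ) (m' : ℤ) (C' : A)
    (hdisk : Ext1Vanishes K' (disk (m'+1) C')) : Ext1Vanishes (K'.X m') C' := by
  intro M' i' p' w' h'
  obtain ⟨s, hs⟩ := hdisk (Ecx K' m' p') (ef K' m' p' i' w') (eg K' m' p')
    (ef_eg_zero K' m' p' i' w') (diskExt_shortExact K' m' p' i' w' h')
  refine ⟨s.f m' ≫ eqToHom (EX_mid K' m' p'), ?_⟩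
  have h2 := congrArg (fun q => HomologicalComplex.Hom.f q m') hs
  simp only [HomologicalComplex.comp_f] at h2
  have h3 : (eg K' m' p').f m' = eqToHom (EX_mid K' m' p') ≫ p' := egf_mid K' m' p'
  rw [h3] at h2
  rw [Category.assoc]
  exact h2

end DiskExt


lemma exists_lift_of_ext1Vanishes {T C P Q : A} (hC : Ext1Vanishes T C)
    (i : C ⟶ P) (p : P ⟶ Q) (w : i ≫ p = 0) (h : (ShortComplex.mk i p w).ShortExact)
    (φ : T ⟶ Q) : ∃ ψ : T ⟶ P, ψ ≫ p = φ := by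
  obtain ⟨s, hs⟩ := hC _ _ _ _ (pullback_shortExact i p w h φ)
  refine ⟨s ≫ pullback.fst p φ, ?_⟩
  rw [Category.assoc, pullback.condition, ← Category.assoc, hs, Category.id_comp]

lemma isIso_g_of_isZero {Z E T : A} {f : Z ⟶ E} {g : E ⟶ T} {w : f ≫ g = 0}
    (h : (ShortComplex.mk f g w).ShortExact) (hz : IsZero Z) : IsIso g := by
  have := h.epi_g
  have hf : (ShortComplex.mk f g w).f = 0 := hz.eq_of_src _ _
  have : Mono g := ((ShortComplex.exact_iff_mono _ hf).1 h.exact)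
  exact isIso_of_mono_of_epi g

lemma epi_toCycles_of_exactAt (X : ChainComplex A ℤ) (i j : ℤ) (hij : (ComplexShape.down ℤ).prev j = i)
    (hX : X.ExactAt j) : Epi (X.toCycles i j) := by
  have hk : (ComplexShape.down ℤ).next j = j - 1 := ChainComplex.next ℤ j
  have hE := ((X.exactAt_iff' i j (j-1) hij hk).1 hX).epi_toCycles
  have heq : X.toCycles i j = (X.sc' i j (j-1)).toCycles ≫ (X.cyclesIsoSc' i j (j-1) hij hk).inv := by
    exact (Iso.eq_comp_inv _).2 (X.toCycles_cyclesIsoSc'_hom i j (j-1) hij hk)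
  rw [heq]
  exact @epi_comp _ _ _ _ _ _ hE _ _



section Recursion

variable {X E K : ChainComplex A ℤ} (g : E ⟶ K)

/-- The section in degrees below the bound, where `g` is an isomorphism. -/
noncomputable def baseSec (N : ℤ) (hiso : ∀ n, n < N → IsIso (g.f n)) :
    ∀ n : ℤ, K.X n ⟶ E.X n := fun n =>
  if hn : n < N then letI := hiso n hn; inv (g.f n) else 0

open Classical in
noncomputable def stepFun (n : ℤ) (sp : K.X (n-1) ⟶ E.X (n-1)) : K.X n ⟶ E.X n :=
  if hex : ∃ t : K.X n ⟶ E.X n, t ≫ g.f n = 𝟙 _ ∧ t ≫ E.d n (n-1) = K.d n (n-1) ≫ sp then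
    hex.choose
  else 0

lemma stepFun_spec (n : ℤ) (sp : K.X (n-1) ⟶ E.X (n-1))
    (hex : ∃ t : K.X n ⟶ E.X n, t ≫ g.f n = 𝟙 _ ∧ t ≫ E.d n (n-1) = K.d n (n-1) ≫ sp) :
    stepFun g n sp ≫ g.f n = 𝟙 _ ∧
      stepFun g n sp ≫ E.d n (n-1) = K.d n (n-1) ≫ sp := by
  rw [stepFun]
  rw [dif_pos hex]
  exact hex.choose_spec

/-- The recursive approximations to the section. -/
noncomputable def GG (N : ℤ) (hiso : ∀ n, n < N → IsIso (g.f n)) :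
    ℕ → ∀ n : ℤ, K.X n ⟶ E.X n
  | 0 => baseSec g N hiso
  | (k+1) => fun n =>
      if n < N then baseSec g N hiso n else stepFun g n (GG N hiso k (n-1))

lemma GG_zero (N : ℤ) (hiso : ∀ n, n < N → IsIso (g.f n)) (n : ℤ) :
    GG g N hiso 0 n = baseSec g N hiso n := rfl

lemma GG_succ (N : ℤ) (hiso : ∀ n, n < N → IsIso (g.f n)) (k : ℕ) (n : ℤ) :
    GG g N hiso (k+1) n =
      if n < N then baseSec g N hiso n else stepFun g n (GG g N hiso k (n-1)) := rfl

end Recursion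

/-- The key inductive step. -/
lemma step_section {X E K : ChainComplex A ℤ} (f : X ⟶ E) (g : E ⟶ K)
    (w : f ≫ g = 0) (hse : (ShortComplex.mk f g w).ShortExact) (n : ℤ)
    (hX1 : X.ExactAt (n-1))
    (hC : Ext1Vanishes (K.X n) (X.cycles n))
    (sp : K.X (n-1) ⟶ E.X (n-1)) (hsp : sp ≫ g.f (n-1) = 𝟙 _)
    (spp : K.X (n-1-1) ⟶ E.X (n-1-1))
    (hsp2 : sp ≫ E.d (n-1) (n-1-1) = K.d (n-1) (n-1-1) ≫ spp) :
    ∃ t : K.X n ⟶ E.X n, t ≫ g.f n = 𝟙 _ ∧ t ≫ E.d n (n-1) = K.d n (n-1) ≫ sp := by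
  have hdeg : ∀ m : ℤ,
      (ShortComplex.mk (f.f m) (g.f m) (by rw [← HomologicalComplex.comp_f, w]; rfl)).ShortExact :=
    fun m => hse.map_of_exact (HomologicalComplex.eval A (ComplexShape.down ℤ) m)
  have hgepi : ∀ m : ℤ, Epi (g.f m) := fun m => (hdeg m).epi_g
  have hfmono : ∀ m : ℤ, Mono (f.f m) := fun m => (hdeg m).mono_f
  -- the pullback P'
  set gZ : E.cycles (n-1) ⟶ K.X (n-1) := E.iCycles (n-1) ≫ g.f (n-1) with hgZ
  set P' := pullback gZ (K.d n (n-1)) with hP'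
  have hcomm : E.toCycles n (n-1) ≫ gZ = g.f n ≫ K.d n (n-1) := by
    rw [hgZ, ← Category.assoc, HomologicalComplex.toCycles_i, g.comm]
  set α : E.X n ⟶ P' := pullback.lift (E.toCycles n (n-1)) (g.f n) hcomm with hα
  -- the map zc : K.X n ⟶ E.cycles (n-1)
  have hzc0 : (K.d n (n-1) ≫ sp) ≫ E.d (n-1) (n-1-1) = 0 := by
    rw [Category.assoc, hsp2, ← Category.assoc, K.d_comp_d, zero_comp]
  set zc : K.X n ⟶ E.cycles (n-1) :=
    E.liftCycles (K.d n (n-1) ≫ sp) (n-1-1) (ChainComplex.next ℤ (n-1)) hzc0 with hzc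
  have hzci : zc ≫ E.iCycles (n-1) = K.d n (n-1) ≫ sp := by
    rw [hzc]; exact E.liftCycles_i _ _ _ _
  have hβcomm : zc ≫ gZ = 𝟙 (K.X n) ≫ K.d n (n-1) := by
    rw [hgZ, ← Category.assoc, hzci, Category.assoc, hsp, Category.comp_id, Category.id_comp]
  set β : K.X n ⟶ P' := pullback.lift zc (𝟙 _) hβcomm with hβ
  have hβsnd : β ≫ pullback.snd gZ (K.d n (n-1)) = 𝟙 _ := pullback.lift_snd _ _ _
  -- the kernel map κ
  set κ : X.cycles n ⟶ E.X n := X.iCycles n ≫ f.f n with hκ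
  have hκα : κ ≫ α = 0 := by
    apply pullback.hom_ext
    · rw [Category.assoc, hα, pullback.lift_fst, zero_comp]
      rw [← cancel_mono (E.iCycles (n-1))]
      rw [Category.assoc, HomologicalComplex.toCycles_i, hκ, Category.assoc, f.comm n (n-1),
        ← Category.assoc, HomologicalComplex.iCycles_d, zero_comp, zero_comp]
    · rw [Category.assoc, hα, pullback.lift_snd, zero_comp, hκ, Category.assoc,
        ← HomologicalComplex.comp_f, w, HomologicalComplex.zero_f]
      rw [comp_zero]
  have hαsnd : α ≫ pullback.snd gZ (K.d n (n-1)) = g.f n := pullback.lift_snd _ _ _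
  have hαfst : α ≫ pullback.fst gZ (K.d n (n-1)) = E.toCycles n (n-1) := pullback.lift_fst _ _ _
  have hκmono : Mono κ := by
    rw [hκ]
    have := hfmono n
    exact mono_comp _ _
  -- κ is the kernel of α
  have hexact : (ShortComplex.mk κ α hκα).Exact := by
    apply ShortComplex.exact_of_f_is_kernel
    refine KernelFork.IsLimit.ofι' _ _ (fun {W} k hk => ?_)
    have hk1 : k ≫ g.f n = 0 := by
      rw [← hαsnd, ← Category.assoc, hk, zero_comp]
    obtain ⟨l, hl⟩ := KernelFork.IsLimit.lift' (hdeg n).fIsKernel k hk1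
    dsimp at hl
    have hl2 : l ≫ X.d n (n-1) = 0 := by
      have := hfmono (n-1)
      rw [← cancel_mono (f.f (n-1)), Category.assoc, ← f.comm n (n-1), ← Category.assoc, hl,
        zero_comp]
      have : k ≫ E.d n (n-1) = 0 := by
        rw [← E.toCycles_i n (n-1), ← hαfst, ← Category.assoc, ← Category.assoc, hk, zero_comp,
          zero_comp]
      rw [this]
    obtain ⟨m, hm⟩ := KernelFork.IsLimit.lift' (X.cyclesIsKernel n (n-1)
      (ChainComplex.next ℤ n)) l hl2
    dsimp at hm
    refine ⟨m, ?_⟩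
    show m ≫ κ = k
    rw [hκ, ← Category.assoc, hm, hl]
  -- α is an epimorphism
  have hαepi : Epi α := by
    have h₂comm : HomologicalComplex.cyclesMap f (n-1) ≫ gZ = 0 ≫ K.d n (n-1) := by
      rw [hgZ, ← Category.assoc, HomologicalComplex.cyclesMap_i, Category.assoc,
        ← HomologicalComplex.comp_f, w, HomologicalComplex.zero_f, comp_zero, zero_comp]
    set ι₂ : X.cycles (n-1) ⟶ P' := pullback.lift (HomologicalComplex.cyclesMap f (n-1)) 0 h₂comm
      with hι₂
    have hu : Epi (X.toCycles n (n-1)) := by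
      refine epi_toCycles_of_exactAt X n (n-1) ?_ hX1
      rw [ChainComplex.prev]; omega
    have huι : X.toCycles n (n-1) ≫ ι₂ = f.f n ≫ α := by
      apply pullback.hom_ext
      · rw [Category.assoc, Category.assoc, hι₂, hα, pullback.lift_fst, pullback.lift_fst]
        rw [← cancel_mono (E.iCycles (n-1)), Category.assoc, Category.assoc,
          HomologicalComplex.cyclesMap_i, HomologicalComplex.toCycles_i]
        rw [← Category.assoc, HomologicalComplex.toCycles_i]
        exact (f.comm n (n-1)).symm
      · rw [Category.assoc, Category.assoc, hι₂, hα, pullback.lift_snd, pullback.lift_snd,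
          comp_zero, ← HomologicalComplex.comp_f, w, HomologicalComplex.zero_f]
    have hι₂snd : ι₂ ≫ pullback.snd gZ (K.d n (n-1)) = 0 := by
      rw [hι₂, pullback.lift_snd]
    have hι₂mono : Mono ι₂ := by
      have := hfmono (n-1)
      exact mono_of_mono_fac (pullback.lift_fst _ _ _)
    have hexact2 : (ShortComplex.mk ι₂ (pullback.snd gZ (K.d n (n-1))) hι₂snd).Exact := by
      apply ShortComplex.exact_of_f_is_kernel
      refine KernelFork.IsLimit.ofι' _ _ (fun {W} k hk => ?_)
      replace hk : k ≫ pullback.snd gZ (K.d n (n-1)) = 0 := hk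
      have hk1 : (k ≫ pullback.fst gZ (K.d n (n-1))) ≫ E.iCycles (n-1) ≫ g.f (n-1) = 0 := by
        rw [Category.assoc, ← hgZ, pullback.condition, ← Category.assoc, hk, zero_comp]
      obtain ⟨v, hv⟩ := KernelFork.IsLimit.lift' (hdeg (n-1)).fIsKernel
        (k ≫ pullback.fst gZ (K.d n (n-1)) ≫ E.iCycles (n-1))
        (by show (k ≫ pullback.fst gZ (K.d n (n-1)) ≫ E.iCycles (n-1)) ≫ g.f (n-1) = 0
            simp only [Category.assoc] at hk1 ⊢
            exact hk1)
      dsimp at hv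
      have hv2 : v ≫ X.d (n-1) (n-1-1) = 0 := by
        have := hfmono (n-1-1)
        rw [← cancel_mono (f.f (n-1-1)), Category.assoc, ← f.comm, ← Category.assoc, hv,
          zero_comp, Category.assoc, Category.assoc, HomologicalComplex.iCycles_d, comp_zero,
          comp_zero]
      obtain ⟨m, hm⟩ := KernelFork.IsLimit.lift' (X.cyclesIsKernel (n-1) (n-1-1)
        (ChainComplex.next ℤ (n-1))) v hv2
      dsimp at hm
      refine ⟨m, ?_⟩
      show m ≫ ι₂ = k
      apply pullback.hom_ext
      · rw [Category.assoc, hι₂, pullback.lift_fst, ← cancel_mono (E.iCycles (n-1)),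
          Category.assoc, Category.assoc, HomologicalComplex.cyclesMap_i, ← Category.assoc,
          hm, hv]
      · rw [Category.assoc, hι₂, pullback.lift_snd, comp_zero]
        exact hk.symm
    have hsndepi : Epi (pullback.snd gZ (K.d n (n-1))) := by
      have : IsSplitEpi (pullback.snd gZ (K.d n (n-1))) := IsSplitEpi.mk' ⟨β, hβsnd⟩
      infer_instance
    have SES2 : (ShortComplex.mk ι₂ (pullback.snd gZ (K.d n (n-1))) hι₂snd).ShortExact :=
      ShortComplex.ShortExact.mk' hexact2 hι₂mono hsndepi
    refine (Preadditive.epi_iff_cancel_zero _).2 (fun W c hc => ?_)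
    have h1 : ι₂ ≫ c = 0 := by
      rw [← cancel_epi (X.toCycles n (n-1)), ← Category.assoc, huι, Category.assoc, hc,
        comp_zero, comp_zero]
    obtain ⟨d', hd'⟩ := CokernelCofork.IsColimit.desc' SES2.gIsCokernel c h1
    dsimp at hd'
    have hgd : g.f n ≫ d' = 0 := by
      rw [← hαsnd, Category.assoc, hd', hc]
    have hd0 : d' = 0 := by
      haveI := hgepi n
      exact zero_of_epi_comp (g.f n) hgd
    rw [← hd', hd0, comp_zero]
  have SESκα : (ShortComplex.mk κ α hκα).ShortExact :=
    ShortComplex.ShortExact.mk' hexact hκmono hαepi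
  obtain ⟨t, ht⟩ := exists_lift_of_ext1Vanishes hC κ α hκα SESκα β
  refine ⟨t, ?_, ?_⟩
  · rw [← hαsnd, ← Category.assoc, ht, hβ, pullback.lift_snd]
  · rw [← E.toCycles_i n (n-1), ← hαfst, ← Category.assoc, ← Category.assoc, ht, hβ,
      pullback.lift_fst, hzci]

theorem cotorsionPair_bddBelow_acyclic_of_disks
    [HasLimits A] [HasColimits A]
    (𝒳 𝒴 : Set (ChainComplex A ℤ))
    (h𝒳 : ∀ K, K ∈ 𝒳 ↔ ∀ L ∈ 𝒴, Ext1Vanishes K L)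
    (h𝒴 : ∀ L, L ∈ 𝒴 ↔ ∀ K ∈ 𝒳, Ext1Vanishes K L)
    (𝒞 : Set A)
    (hD : ∀ (n : ℤ) (C : A), C ∈ 𝒞 → disk n C ∈ 𝒴)
    (X : ChainComplex A ℤ) (hbdd : ∃ N : ℤ, ∀ n < N, IsZero (X.X n))
    (hacyclic : ∀ n, X.ExactAt n)
    (hcycles : ∀ n, X.cycles n ∈ 𝒞) :
    X ∈ 𝒴 := by
  obtain ⟨N, hN⟩ := hbdd
  rw [h𝒴]
  intro K hK E f g w hse
  have hdeg : ∀ m : ℤ, (ShortComplex.mk (f.f m) (g.f m)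
      (by rw [← HomologicalComplex.comp_f, w, HomologicalComplex.zero_f])).ShortExact :=
    fun m => hse.map_of_exact (HomologicalComplex.eval A (ComplexShape.down ℤ) m)
  have hCn : ∀ n : ℤ, Ext1Vanishes (K.X n) (X.cycles n) := fun n =>
    DiskExt.ext1Vanishes_of_disk K n (X.cycles n)
      ((h𝒳 K).1 hK _ (hD (n+1) _ (hcycles n)))
  have hiso : ∀ n, n < N → IsIso (g.f n) := fun n hn => isIso_g_of_isZero (hdeg n) (hN n hn)
  have hbase_sec : ∀ n (hn : n < N), baseSec g N hiso n ≫ g.f n = 𝟙 _ := by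
    intro n hn
    rw [baseSec]
    rw [dif_pos hn]
    letI := hiso n hn
    exact IsIso.inv_hom_id _
  have hbase_d : ∀ n : ℤ, n < N →
      baseSec g N hiso n ≫ E.d n (n-1) = K.d n (n-1) ≫ baseSec g N hiso (n-1) := by
    intro n hn
    have hn' : n - 1 < N := by omega
    rw [baseSec, baseSec]
    rw [dif_pos hn, dif_pos hn']
    letI := hiso n hn
    letI := hiso (n-1) hn'
    rw [IsIso.inv_comp_eq, ← Category.assoc, g.comm n (n-1), Category.assoc,
      IsIso.hom_inv_id, Category.comp_id]
  have hexists : ∀ (n : ℤ) (sp : K.X (n-1) ⟶ E.X (n-1)), sp ≫ g.f (n-1) = 𝟙 _ →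
      (∃ spp, sp ≫ E.d (n-1) (n-1-1) = K.d (n-1) (n-1-1) ≫ spp) →
      ∃ t : K.X n ⟶ E.X n, t ≫ g.f n = 𝟙 _ ∧ t ≫ E.d n (n-1) = K.d n (n-1) ≫ sp := by
    intro n sp hsec hd
    obtain ⟨spp, hspp⟩ := hd
    exact step_section f g w hse n (hacyclic (n-1)) (hCn n) sp hsec spp hspp
  have stab : ∀ (k : ℕ) (n : ℤ), n ≤ N - 1 + k → GG g N hiso (k+1) n = GG g N hiso k n := by
    intro k
    induction k with
    | zero =>
      intro n hn
      rw [GG_succ g N hiso 0 n, if_pos (show n < N by omega), GG_zero g N hiso n]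
    | succ k ih =>
      intro n hn
      rw [GG_succ g N hiso (k+1) n, GG_succ g N hiso k n]
      by_cases hn' : n < N
      · rw [if_pos hn', if_pos hn']
      · rw [if_neg hn', if_neg hn', ih (n-1) (by push_cast at hn ⊢; omega)]
  have stab' : ∀ (j k : ℕ) (n : ℤ), n ≤ N - 1 + k → GG g N hiso (k + j) n = GG g N hiso k n := by
    intro j
    induction j with
    | zero => intro k n _; rfl
    | succ j ih =>
      intro k n hn
      have he : k + (j+1) = (k+j) + 1 := rfl
      rw [he, stab (k+j) n (by push_cast at hn ⊢; omega), ih k n hn]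
  have hGeq : ∀ (k₁ k₂ : ℕ) (n : ℤ), n ≤ N - 1 + k₁ → n ≤ N - 1 + k₂ →
      GG g N hiso k₁ n = GG g N hiso k₂ n := by
    intro k₁ k₂ n h1 h2
    rcases le_total k₁ k₂ with hle | hle
    · obtain ⟨j, rfl⟩ := Nat.exists_eq_add_of_le hle
      rw [stab' j k₁ n h1]
    · obtain ⟨j, rfl⟩ := Nat.exists_eq_add_of_le hle
      rw [stab' j k₂ n h2]
  have hInv : ∀ (k : ℕ) (n : ℤ), n ≤ N - 1 + k →
      (GG g N hiso k n ≫ g.f n = 𝟙 _ ∧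
        GG g N hiso k n ≫ E.d n (n-1) = K.d n (n-1) ≫ GG g N hiso k (n-1)) := by
    intro k
    induction k with
    | zero =>
      intro n hn
      constructor
      · rw [GG_zero g N hiso n]
        exact hbase_sec n (by push_cast at hn; omega)
      · rw [GG_zero g N hiso n, GG_zero g N hiso (n-1)]
        exact hbase_d n (by push_cast at hn; omega)
    | succ k ih =>
      intro n hn
      by_cases hn' : n < N
      · constructor
        · rw [GG_succ g N hiso k n, if_pos hn']
          exact hbase_sec n hn'
        · rw [GG_succ g N hiso k n, if_pos hn', GG_succ g N hiso k (n-1),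
            if_pos (show n - 1 < N by omega)]
          exact hbase_d n hn'
      · have hprev := ih (n-1) (by push_cast at hn ⊢; omega)
        have hex := hexists n (GG g N hiso k (n-1)) hprev.1 ⟨GG g N hiso k (n-1-1), hprev.2⟩
        have hst := stepFun_spec g n (GG g N hiso k (n-1)) hex
        constructor
        · rw [GG_succ g N hiso k n, if_neg hn']
          exact hst.1
        · rw [GG_succ g N hiso k n, if_neg hn', hst.2,
            stab k (n-1) (by push_cast at hn ⊢; omega)]
  let sfun : ∀ n : ℤ, K.X n ⟶ E.X n := fun n => GG g N hiso (n - N + 1).toNat n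
  have hsfun : ∀ (k : ℕ) (n : ℤ), n ≤ N - 1 + k → sfun n = GG g N hiso k n := by
    intro k n hk
    exact hGeq _ k n (by omega) hk
  have hsec : ∀ n, sfun n ≫ g.f n = 𝟙 _ := by
    intro n
    rw [hsfun (n - N + 1).toNat n (by omega)]
    exact (hInv _ n (by omega)).1
  have hcomm : ∀ n : ℤ, sfun n ≫ E.d n (n-1) = K.d n (n-1) ≫ sfun (n-1) := by
    intro n
    rw [hsfun (n - N + 1).toNat n (by omega), hsfun (n - N + 1).toNat (n-1) (by omega)]
    exact (hInv (n - N + 1).toNat n (by omega)).2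
  refine ⟨{ f := sfun, comm' := ?_ }, ?_⟩
  · intro j j' hjj'
    simp only [ComplexShape.down_Rel] at hjj'
    obtain rfl : j - 1 = j' := by omega
    exact hcomm j
  · ext n
    simp only [HomologicalComplex.comp_f, HomologicalComplex.id_f]
    exact hsec n
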